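/- Let Q : ℝⁿ → [0, ∞] be locally integrable with finite mean oscillation at x₀ ∈ ℝⁿ, i.e. limsup_{ε→0} (1/(Ωₙεⁿ)) ∫_{B(x₀,ε)} |Q(x) − Q̄_ε| dm(x) < ∞, where Q̄_ε is the integral mean of Q over B(x₀,ε). Then for some ε₀ > 0, ∫_{ε < |x−x₀| < ε₀} Q(x) / (|x−x₀| · log(1/|x−x₀|))ⁿ dm(x) = O(log log (1/ε)) as ε → 0. -/

import Mathlib

open Set Metric Topology Filter MeasureTheory

set_option maxHeartbeats 2000000 in
/-- FMO integral estimate: if `Q ≥ 0` is locally integrable and has finite mean oscillation at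
`x₀` (the normalized mean deviations over small balls are bounded near `0`), then for some
`ε₀ > 0` the integral of `Q(x)/(|x−x₀| log(1/|x−x₀|))ⁿ` over the annulus `ε < |x−x₀| < ε₀`
is `O(log log(1/ε))` as `ε → 0`. -/
theorem stmt5 {n : ℕ} (hn : 2 ≤ n) (x₀ : EuclideanSpace ℝ (Fin n))
    (Q : EuclideanSpace ℝ (Fin n) → ℝ) (hQ : ∀ x, 0 ≤ Q x)
    (hQloc : LocallyIntegrable Q volume)
    (Ωn : ℝ) (hΩn : Ωn = (volume (ball (0 : EuclideanSpace ℝ (Fin n)) 1)).toReal)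
    (hFMO : ∃ M : ℝ, ∀ᶠ ε in 𝓝[>] (0:ℝ),
      (1 / (Ωn * ε ^ n)) * ∫ x in ball x₀ ε,
          |Q x - (1 / (Ωn * ε ^ n)) * ∫ y in ball x₀ ε, Q y| ≤ M) :
    ∃ ε₀ > (0:ℝ), ∃ C' > (0:ℝ), ∃ ε₁, 0 < ε₁ ∧ ε₁ < ε₀ ∧ ∀ ε, 0 < ε → ε < ε₁ →
      (∫ x in {x : EuclideanSpace ℝ (Fin n) | ε < ‖x - x₀‖ ∧ ‖x - x₀‖ < ε₀},
          Q x / (‖x - x₀‖ * Real.log (1 / ‖x - x₀‖)) ^ n)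
        ≤ C' * Real.log (Real.log (1 / ε)) := by
  classical
  obtain ⟨M, hM⟩ := hFMO
  have hΩpos : 0 < Ωn := by
    rw [hΩn]
    exact ENNReal.toReal_pos (measure_ball_pos volume 0 one_pos).ne' measure_ball_lt_top.ne
  have hvol : ∀ ρ : ℝ, 0 < ρ → (volume (ball x₀ ρ)).toReal = Ωn * ρ ^ n := by
    intro ρ hρ
    rw [Measure.addHaar_ball_of_pos volume x₀ hρ, finrank_euclideanSpace_fin,
      ENNReal.toReal_mul, ENNReal.toReal_ofReal (pow_nonneg hρ.le n), ← hΩn, mul_comm]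
  -- integrability of Q on balls
  have hQint : ∀ ρ : ℝ, IntegrableOn Q (ball x₀ ρ) volume := fun ρ =>
    (hQloc.integrableOn_isCompact (isCompact_closedBall x₀ ρ)).mono_set
      ball_subset_closedBall
  set A : ℝ → ℝ := fun ρ => (1 / (Ωn * ρ ^ n)) * ∫ y in ball x₀ ρ, Q y with hAdef
  -- extract the FMO bound on an interval
  obtain ⟨δ', hδ'pos, hdev⟩ : ∃ δ' > (0:ℝ), ∀ ρ : ℝ, 0 < ρ → ρ < δ' →
      (∫ x in ball x₀ ρ, |Q x - A ρ|) ≤ M * (Ωn * ρ ^ n) := by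
    rw [eventually_nhdsWithin_iff, Metric.eventually_nhds_iff] at hM
    obtain ⟨δ', hδ'pos, h⟩ := hM
    refine ⟨δ', hδ'pos, fun ρ hρ hρδ => ?_⟩
    have h1 := h (y := ρ) (by simpa [Real.dist_eq, abs_of_pos hρ] using hρδ) hρ
    have hV : 0 < Ωn * ρ ^ n := by positivity
    calc (∫ x in ball x₀ ρ, |Q x - A ρ|)
        = (Ωn * ρ ^ n) * ((1 / (Ωn * ρ ^ n)) * ∫ x in ball x₀ ρ, |Q x - A ρ|) := by
          field_simp
      _ ≤ (Ωn * ρ ^ n) * M := mul_le_mul_of_nonneg_left h1 hV.le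
      _ = M * (Ωn * ρ ^ n) := by ring
  have hM0 : 0 ≤ M := by
    have h1 := hdev (δ' / 2) (by positivity) (by linarith)
    have h2 : (0:ℝ) ≤ ∫ x in ball x₀ (δ' / 2), |Q x - A (δ' / 2)| :=
      integral_nonneg fun x => abs_nonneg _
    nlinarith [pow_pos (show (0:ℝ) < δ' / 2 by positivity) n, hΩpos,
      mul_pos hΩpos (pow_pos (show (0:ℝ) < δ' / 2 by positivity) n)]
  set δ₀ : ℝ := min (δ' / 2) (1 / 4) with hδ₀def
  have hδ₀pos : 0 < δ₀ := lt_min (by positivity) (by norm_num)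
  have hδ₀lt : δ₀ < δ' := lt_of_le_of_lt (min_le_left _ _) (by linarith)
  have hδ₀le : δ₀ ≤ 1 / 4 := min_le_right _ _
  set r : ℕ → ℝ := fun k => δ₀ / 2 ^ k with hrdef
  have hrpos : ∀ k, 0 < r k := fun k => by positivity
  have hr0 : r 0 = δ₀ := by simp [hrdef]
  have hrsucc : ∀ k, r (k + 1) = r k / 2 := by
    intro k; simp only [hrdef]; rw [pow_succ]; ring
  have hranti : ∀ j k, j ≤ k → r k ≤ r j := by
    intro j k hjk
    apply div_le_div_of_nonneg_left hδ₀pos.le (by positivity)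
    exact pow_le_pow_right₀ (by norm_num) hjk
  have hrle : ∀ k, r k ≤ δ₀ := fun k => hr0 ▸ hranti 0 k (Nat.zero_le k)
  have hrδ' : ∀ k, r k < δ' := fun k => lt_of_le_of_lt (hrle k) hδ₀lt
  -- log lower bound on scales
  have hlog2 : (0:ℝ) < Real.log 2 := Real.log_pos (by norm_num)
  have hloglb : ∀ k : ℕ, ((k:ℝ) + 2) * Real.log 2 ≤ Real.log (1 / r k) := by
    intro k
    have h1 : (2:ℝ) ^ (k + 2) ≤ 1 / r k := by
      simp only [hrdef, one_div_div]
      rw [le_div_iff₀ hδ₀pos]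
      have h2 : (0:ℝ) < 2 ^ k := by positivity
      have h3 : (2:ℝ) ^ (k + 2) = 2 ^ k * 4 := by rw [pow_add]; norm_num
      nlinarith
    have h2 := Real.log_le_log (by positivity) h1
    rw [Real.log_pow] at h2
    push_cast at h2
    linarith
  have hlogpos : ∀ k : ℕ, 0 < Real.log (1 / r k) := by
    intro k
    calc (0:ℝ) < ((k:ℝ) + 2) * Real.log 2 := by positivity
      _ ≤ _ := hloglb k
  -- mean growth
  have hstep : ∀ k : ℕ, A (r (k + 1)) ≤ A (r k) + 2 ^ n * M := by
    intro k
    have hρ := hrpos k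
    have hρ' := hrpos (k + 1)
    have hV' : (0:ℝ) < Ωn * (r (k + 1)) ^ n := by positivity
    set c := A (r k) with hc
    have hconst : IntegrableOn (fun _ => c) (ball x₀ (r (k + 1))) volume :=
      integrableOn_const measure_ball_lt_top.ne
    have habs : IntegrableOn (fun x => |Q x - c|) (ball x₀ (r k)) volume :=
      ((hQint _).sub (integrableOn_const measure_ball_lt_top.ne)).abs
    have h2 : A (r (k + 1)) - c
        = (1 / (Ωn * (r (k + 1)) ^ n)) * ∫ x in ball x₀ (r (k + 1)), (Q x - c) := by
      rw [integral_sub (hQint _) hconst, setIntegral_const, measureReal_def, hvol _ hρ', smul_eq_mul]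
      simp only [hAdef]
      field_simp
      try ring
    have h3 : |A (r (k + 1)) - c|
        ≤ (1 / (Ωn * (r (k + 1)) ^ n)) * ∫ x in ball x₀ (r k), |Q x - c| := by
      rw [h2, abs_mul, abs_of_pos (show (0:ℝ) < 1 / (Ωn * (r (k + 1)) ^ n) by positivity)]
      apply mul_le_mul_of_nonneg_left _ (by positivity)
      calc |∫ x in ball x₀ (r (k + 1)), (Q x - c)|
          ≤ ∫ x in ball x₀ (r (k + 1)), |Q x - c| := by
            simpa [Real.norm_eq_abs] using
              norm_integral_le_integral_norm (μ := volume.restrict (ball x₀ (r (k + 1))))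
                (fun x => Q x - c)
        _ ≤ ∫ x in ball x₀ (r k), |Q x - c| := by
            apply setIntegral_mono_set habs
              (Filter.Eventually.of_forall fun x => abs_nonneg _)
            exact (ball_subset_ball (by linarith [hrsucc k, hρ'] : r (k + 1) ≤ r k)).eventuallyLE
    have h4 : (∫ x in ball x₀ (r k), |Q x - c|) ≤ M * (Ωn * (r k) ^ n) := hdev _ hρ (hrδ' k)
    have h5 : (1 / (Ωn * (r (k + 1)) ^ n)) * (M * (Ωn * (r k) ^ n)) = 2 ^ n * M := by
      have hr2 : r k = 2 * r (k + 1) := by rw [hrsucc]; ring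
      rw [hr2, mul_pow]
      field_simp
    have h6 : |A (r (k + 1)) - c| ≤ 2 ^ n * M := by
      calc |A (r (k + 1)) - c|
          ≤ (1 / (Ωn * (r (k + 1)) ^ n)) * ∫ x in ball x₀ (r k), |Q x - c| := h3
        _ ≤ (1 / (Ωn * (r (k + 1)) ^ n)) * (M * (Ωn * (r k) ^ n)) :=
            mul_le_mul_of_nonneg_left h4 (by positivity)
        _ = 2 ^ n * M := h5
    linarith [le_abs_self (A (r (k + 1)) - c), h6]
  have hA0 : 0 ≤ A (r 0) := by
    apply mul_nonneg (by positivity)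
    exact integral_nonneg fun x => hQ x
  have hAk : ∀ k : ℕ, A (r k) ≤ A (r 0) + 2 ^ n * M * k := by
    intro k
    induction k with
    | zero => simp
    | succ k ih =>
      have h1 := hstep k
      push_cast
      push_cast at ih
      linarith
  have hballint : ∀ k : ℕ, (∫ x in ball x₀ (r k), Q x)
      ≤ Ωn * (r k) ^ n * (A (r 0) + 2 ^ n * M * k) := by
    intro k
    have hV : (0:ℝ) < Ωn * (r k) ^ n := by positivity
    have h1 : (∫ x in ball x₀ (r k), Q x) = (Ωn * (r k) ^ n) * A (r k) := by
      simp only [hAdef]; field_simp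
      rw [mul_div_assoc, div_self (pow_pos (hrpos k) n).ne', mul_one]
    rw [h1]
    exact mul_le_mul_of_nonneg_left (hAk k) hV.le
  -- the weight function and integrand
  set g : EuclideanSpace ℝ (Fin n) → ℝ :=
    fun x => Q x / (‖x - x₀‖ * Real.log (1 / ‖x - x₀‖)) ^ n with hgdef
  have hnorm : Measurable fun x : EuclideanSpace ℝ (Fin n) => ‖x - x₀‖ :=
    (continuous_id.sub continuous_const).norm.measurable
  have hgm : AEStronglyMeasurable g volume := by
    have hden : Measurable fun x : EuclideanSpace ℝ (Fin n) =>
        (((‖x - x₀‖ * Real.log (1 / ‖x - x₀‖)) ^ n)⁻¹ : ℝ) :=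
      ((hnorm.mul (Real.measurable_log.comp
        (measurable_const.div hnorm))).pow_const n).inv
    have he : g = fun x => Q x * ((‖x - x₀‖ * Real.log (1 / ‖x - x₀‖)) ^ n)⁻¹ := by
      funext x
      show Q x / (‖x - x₀‖ * Real.log (1 / ‖x - x₀‖)) ^ n = _
      rw [div_eq_mul_inv (Q x)]
    rw [he]
    exact hQloc.aestronglyMeasurable.mul hden.aestronglyMeasurable
  -- integrability of g on suitable sets
  have hint : ∀ (s : Set (EuclideanSpace ℝ (Fin n))) (L : ℝ), 0 < L → MeasurableSet s →
      s ⊆ ball x₀ δ₀ →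
      (∀ x ∈ s, L ≤ (‖x - x₀‖ * Real.log (1 / ‖x - x₀‖)) ^ n) →
      IntegrableOn g s volume := by
    intro s L hL hs hsub hlb
    have hQs : IntegrableOn Q s volume := (hQint δ₀).mono_set hsub
    refine Integrable.mono' (hQs.div_const L) hgm.restrict ?_
    rw [ae_restrict_iff' hs]
    filter_upwards with x hx
    have h1 : (0:ℝ) < (‖x - x₀‖ * Real.log (1 / ‖x - x₀‖)) ^ n :=
      lt_of_lt_of_le hL (hlb x hx)
    rw [Real.norm_eq_abs, hgdef, abs_of_nonneg (div_nonneg (hQ x) h1.le)]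
    exact div_le_div_of_nonneg_left (hQ x) hL (hlb x hx)
  -- rings
  set Ring : ℕ → Set (EuclideanSpace ℝ (Fin n)) :=
    fun k => {x | r (k + 1) ≤ ‖x - x₀‖ ∧ ‖x - x₀‖ < r k} with hRdef
  have hRmeas : ∀ k, MeasurableSet (Ring k) := fun k => hnorm measurableSet_Ico
  have hRsub : ∀ k, Ring k ⊆ ball x₀ δ₀ := by
    intro k x hx
    rw [mem_ball_iff_norm]
    exact lt_of_lt_of_le hx.2 (hrle k)
  have hRlb : ∀ k, ∀ x ∈ Ring k,
      (r (k + 1) * Real.log (1 / r k)) ^ n ≤ (‖x - x₀‖ * Real.log (1 / ‖x - x₀‖)) ^ n := by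
    intro k x hx
    obtain ⟨h1, h2⟩ := hx
    have hd0 : 0 < ‖x - x₀‖ := lt_of_lt_of_le (hrpos (k + 1)) h1
    have hlog : Real.log (1 / r k) ≤ Real.log (1 / ‖x - x₀‖) :=
      Real.log_le_log (by positivity) (by
        apply div_le_div_of_nonneg_left (by norm_num) hd0 h2.le)
    apply pow_le_pow_left₀ (mul_nonneg (hrpos _).le (hlogpos k).le)
    exact mul_le_mul h1 hlog (hlogpos k).le (norm_nonneg _)
  have hRdisj : ∀ j k, j ≠ k → Disjoint (Ring j) (Ring k) := by
    have key : ∀ j k, j < k → Disjoint (Ring j) (Ring k) := by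
      intro j k h
      rw [Set.disjoint_left]
      rintro x ⟨_, hx2⟩ ⟨hy1, _⟩
      have h3 : r k ≤ r (j + 1) := hranti (j + 1) k h
      linarith
    intro j k hjk
    rcases lt_or_gt_of_ne hjk with h | h
    · exact key j k h
    · exact (key k j h).symm
  have hRint : ∀ k, IntegrableOn g (Ring k) volume := fun k =>
    hint (Ring k) _ (pow_pos (mul_pos (hrpos _) (hlogpos k)) n) (hRmeas k) (hRsub k) (hRlb k)
  -- the key ring estimate
  set a : ℝ := A (r 0) with hadef
  set b : ℝ := 2 ^ n * M with hbdef
  have hb0 : 0 ≤ b := by positivity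
  set C₂ : ℝ := Ωn * 2 ^ n * (a + b) / (Real.log 2) ^ 2 with hC₂def
  have hC₂0 : 0 ≤ C₂ := by
    apply div_nonneg _ (by positivity)
    have : 0 ≤ a + b := by linarith
    positivity
  have hring : ∀ k : ℕ, (∫ x in Ring k, g x) ≤ C₂ / ((k:ℝ) + 1) := by
    intro k
    have hL : (0:ℝ) < (r (k + 1) * Real.log (1 / r k)) ^ n :=
      pow_pos (mul_pos (hrpos _) (hlogpos k)) n
    have hQR : IntegrableOn Q (Ring k) volume := (hQint δ₀).mono_set (hRsub k)
    have step1 : (∫ x in Ring k, g x)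
        ≤ ∫ x in Ring k, Q x / (r (k + 1) * Real.log (1 / r k)) ^ n := by
      apply setIntegral_mono_on (hRint k) (hQR.div_const _) (hRmeas k)
      intro x hx
      exact div_le_div_of_nonneg_left (hQ x) hL (hRlb k x hx)
    have step3 : (∫ x in Ring k, Q x) ≤ ∫ x in ball x₀ (r k), Q x := by
      apply setIntegral_mono_set (hQint (r k)) (Filter.Eventually.of_forall hQ)
      apply HasSubset.Subset.eventuallyLE
      intro x hx
      rw [mem_ball_iff_norm]
      exact hx.2
    have hℓ : ((k:ℝ) + 1) ^ 2 * (Real.log 2) ^ 2 ≤ (Real.log (1 / r k)) ^ n := by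
      have h1 : ((k:ℝ) + 1) * Real.log 2 ≤ Real.log (1 / r k) := by
        have := hloglb k
        nlinarith [hlog2]
      have h2 : (1:ℝ) ≤ Real.log (1 / r k) := by
        have := hloglb k
        nlinarith [Real.log_two_gt_d9, Nat.cast_nonneg (α := ℝ) k]
      calc ((k:ℝ) + 1) ^ 2 * (Real.log 2) ^ 2 = (((k:ℝ) + 1) * Real.log 2) ^ 2 := by ring
        _ ≤ (Real.log (1 / r k)) ^ 2 := by
            apply pow_le_pow_left₀ (by positivity) h1
        _ ≤ (Real.log (1 / r k)) ^ n := pow_le_pow_right₀ h2 hn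
    have key : (Ωn * (r k) ^ n * (a + b * k)) / (r (k + 1) * Real.log (1 / r k)) ^ n
        ≤ C₂ / ((k:ℝ) + 1) := by
      rw [div_le_div_iff₀ hL (by positivity)]
      have e0 : (r (k + 1) * Real.log (1 / r k)) ^ n
          = (r k) ^ n / 2 ^ n * (Real.log (1 / r k)) ^ n := by
        rw [mul_pow, hrsucc, div_pow]
      rw [e0]
      have e1 : C₂ * ((r k) ^ n / 2 ^ n * (Real.log (1 / r k)) ^ n)
          = (Ωn * (a + b) * (r k) ^ n) * ((Real.log (1 / r k)) ^ n / (Real.log 2) ^ 2) := by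
        rw [hC₂def]
        field_simp
      rw [e1]
      have h3 : Ωn * (r k) ^ n * (a + b * k) * ((k:ℝ) + 1)
          ≤ (Ωn * (a + b) * (r k) ^ n) * ((k:ℝ) + 1) ^ 2 := by
        have hk0 : (0:ℝ) ≤ (k:ℝ) := Nat.cast_nonneg k
        have hab : a + b * k ≤ (a + b) * ((k:ℝ) + 1) := by nlinarith
        nlinarith [mul_le_mul_of_nonneg_left
          (mul_le_mul_of_nonneg_right hab (show (0:ℝ) ≤ (k:ℝ) + 1 by positivity))
          (show (0:ℝ) ≤ Ωn * (r k) ^ n by positivity)]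
      have h4 : ((k:ℝ) + 1) ^ 2 ≤ (Real.log (1 / r k)) ^ n / (Real.log 2) ^ 2 :=
        (le_div_iff₀ (by positivity)).2 hℓ
      calc Ωn * (r k) ^ n * (a + b * k) * ((k:ℝ) + 1)
          ≤ (Ωn * (a + b) * (r k) ^ n) * ((k:ℝ) + 1) ^ 2 := h3
        _ ≤ (Ωn * (a + b) * (r k) ^ n) * ((Real.log (1 / r k)) ^ n / (Real.log 2) ^ 2) := by
            apply mul_le_mul_of_nonneg_left h4
            have : 0 ≤ a + b := by linarith
            positivity
    calc (∫ x in Ring k, g x)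
        ≤ ∫ x in Ring k, Q x / (r (k + 1) * Real.log (1 / r k)) ^ n := step1
      _ = (∫ x in Ring k, Q x) / (r (k + 1) * Real.log (1 / r k)) ^ n := integral_div _ _
      _ ≤ (Ωn * (r k) ^ n * (a + b * k)) / (r (k + 1) * Real.log (1 / r k)) ^ n :=
          div_le_div_of_nonneg_right (step3.trans (hballint k)) hL.le
      _ ≤ C₂ / ((k:ℝ) + 1) := key
  -- choose the final constants
  refine ⟨δ₀, hδ₀pos, 3 * C₂ + 1, by linarith, min (δ₀ / 2) (Real.exp (-Real.exp 2)),
    lt_min (by positivity) (Real.exp_pos _),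
    lt_of_le_of_lt (min_le_left _ _) (by linarith), ?_⟩
  intro ε hε hε₁
  have hεδ : ε < δ₀ := lt_of_lt_of_le hε₁ (le_trans (min_le_left _ _) (by linarith))
  have hεe : ε < Real.exp (-Real.exp 2) := lt_of_lt_of_le hε₁ (min_le_right _ _)
  have hlogε : Real.exp 2 < Real.log (1 / ε) := by
    have h1 : Real.exp (Real.exp 2) < 1 / ε := by
      rw [lt_div_iff₀ hε]
      rw [Real.exp_neg] at hεe
      calc Real.exp (Real.exp 2) * ε
          < Real.exp (Real.exp 2) * (Real.exp (Real.exp 2))⁻¹ :=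
            mul_lt_mul_of_pos_left hεe (Real.exp_pos _)
        _ = 1 := mul_inv_cancel₀ (Real.exp_pos _).ne'
    calc Real.exp 2 = Real.log (Real.exp (Real.exp 2)) := (Real.log_exp _).symm
      _ < Real.log (1 / ε) := Real.log_lt_log (Real.exp_pos _) h1
  have hlogε1 : 1 ≤ Real.log (1 / ε) := by
    nlinarith [Real.add_one_le_exp (2:ℝ)]
  have hLL : 2 ≤ Real.log (Real.log (1 / ε)) := by
    have h1 := Real.log_le_log (Real.exp_pos 2) hlogε.le
    rwa [Real.log_exp] at h1
  -- choose K
  set K : ℕ := ⌈Real.logb 2 (δ₀ / ε)⌉₊ with hKdef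
  have hδεpos : (0:ℝ) < δ₀ / ε := by positivity
  have hK1 : r (K + 1) ≤ ε := by
    have h1 : Real.logb 2 (δ₀ / ε) ≤ (K:ℝ) + 1 := by
      have := Nat.le_ceil (Real.logb 2 (δ₀ / ε))
      push_cast
      linarith
    have h2 : δ₀ / ε ≤ (2:ℝ) ^ (K + 1 : ℕ) := by
      calc δ₀ / ε = (2:ℝ) ^ Real.logb 2 (δ₀ / ε) :=
            (Real.rpow_logb (by norm_num) (by norm_num) hδεpos).symm
        _ ≤ (2:ℝ) ^ ((K:ℝ) + 1) := (Real.rpow_le_rpow_left_iff (by norm_num)).mpr h1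
        _ = (2:ℝ) ^ (K + 1 : ℕ) := by
            rw [← Real.rpow_natCast]
            push_cast
            ring_nf
    show δ₀ / 2 ^ (K + 1) ≤ ε
    rw [div_le_iff₀ (by positivity)]
    rw [div_le_iff₀ hε] at h2
    nlinarith
  have hK2 : (K:ℝ) + 1 ≤ 4 * Real.log (1 / ε) := by
    have hδε1 : (1:ℝ) ≤ δ₀ / ε := (one_le_div hε).2 hεδ.le
    have hlb0 : 0 ≤ Real.logb 2 (δ₀ / ε) := Real.logb_nonneg (by norm_num) hδε1
    have h1 : (K:ℝ) < Real.logb 2 (δ₀ / ε) + 1 := Nat.ceil_lt_add_one hlb0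
    have h2 : Real.logb 2 (δ₀ / ε) ≤ Real.log (1 / ε) / Real.log 2 := by
      rw [Real.logb]
      apply div_le_div_of_nonneg_right _ hlog2.le
      apply Real.log_le_log hδεpos
      apply div_le_div_of_nonneg_right _ hε.le
      linarith
    have h3 : Real.log (1 / ε) / Real.log 2 ≤ 2 * Real.log (1 / ε) := by
      rw [div_le_iff₀ hlog2]
      nlinarith [Real.log_two_gt_d9]
    linarith
  -- covering
  have hfind : ∀ y : ℝ, r (K + 1) ≤ y → y < δ₀ → ∃ k ≤ K, r (k + 1) ≤ y ∧ y < r k := by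
    intro y hy1 hy2
    have hex : ∃ k, r (k + 1) ≤ y := ⟨K, hy1⟩
    refine ⟨Nat.find hex, Nat.find_min' hex hy1, Nat.find_spec hex, ?_⟩
    rcases Nat.eq_zero_or_pos (Nat.find hex) with h0 | hpos
    · rw [h0, hr0]; exact hy2
    · have h' : Nat.find hex = (Nat.find hex - 1) + 1 := by omega
      rw [h']
      exact not_le.1 (Nat.find_min hex (by omega))
  have hcover : {x : EuclideanSpace ℝ (Fin n) | ε < ‖x - x₀‖ ∧ ‖x - x₀‖ < δ₀}
      ⊆ ⋃ k ∈ Finset.range (K + 1), Ring k := by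
    rintro x ⟨hx1, hx2⟩
    obtain ⟨k, hk, h1, h2⟩ := hfind ‖x - x₀‖ (le_of_lt (lt_of_le_of_lt hK1 hx1)) hx2
    exact mem_iUnion₂.2 ⟨k, Finset.mem_range.2 (by omega), h1, h2⟩
  have hUint : IntegrableOn g (⋃ k ∈ Finset.range (K + 1), Ring k) volume :=
    integrableOn_finset_iUnion.2 fun k _ => hRint k
  have hUmeas : MeasurableSet (⋃ k ∈ Finset.range (K + 1), Ring k) :=
    (Finset.range (K + 1)).measurableSet_biUnion fun k _ => hRmeas k
  calc (∫ x in {x : EuclideanSpace ℝ (Fin n) | ε < ‖x - x₀‖ ∧ ‖x - x₀‖ < δ₀}, g x)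
      ≤ ∫ x in ⋃ k ∈ Finset.range (K + 1), Ring k, g x := by
        apply setIntegral_mono_set hUint
        · filter_upwards [ae_restrict_mem hUmeas] with x hx
          obtain ⟨k, _, hxk⟩ := mem_iUnion₂.1 hx
          have hw : (0:ℝ) < (‖x - x₀‖ * Real.log (1 / ‖x - x₀‖)) ^ n :=
            lt_of_lt_of_le (pow_pos (mul_pos (hrpos _) (hlogpos k)) n) (hRlb k x hxk)
          exact div_nonneg (hQ x) hw.le
        · exact HasSubset.Subset.eventuallyLE hcover
    _ = ∑ k ∈ Finset.range (K + 1), ∫ x in Ring k, g x :=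
        integral_biUnion_finset _ (fun k _ => hRmeas k)
          (fun j _ k _ hjk => hRdisj j k hjk) (fun k _ => hRint k)
    _ ≤ ∑ k ∈ Finset.range (K + 1), C₂ / ((k:ℝ) + 1) :=
        Finset.sum_le_sum fun k _ => hring k
    _ = C₂ * (harmonic (K + 1) : ℝ) := by
        have hh : ((harmonic (K + 1) : ℚ) : ℝ)
            = ∑ k ∈ Finset.range (K + 1), ((k:ℝ) + 1)⁻¹ := by
          rw [harmonic]
          push_cast
          rfl
        rw [hh, Finset.mul_sum]
        exact Finset.sum_congr rfl fun k _ => div_eq_mul_inv _ _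
    _ ≤ C₂ * (1 + Real.log ((K:ℝ) + 1)) := by
        apply mul_le_mul_of_nonneg_left _ hC₂0
        have hhl := harmonic_le_one_add_log (K + 1)
        push_cast at hhl
        linarith
    _ ≤ (3 * C₂ + 1) * Real.log (Real.log (1 / ε)) := by
        have hK0 : (0:ℝ) < (K:ℝ) + 1 := by positivity
        have h1 : Real.log ((K:ℝ) + 1) ≤ Real.log (4 * Real.log (1 / ε)) :=
          Real.log_le_log hK0 hK2
        have h2 : Real.log (4 * Real.log (1 / ε))
            = Real.log 4 + Real.log (Real.log (1 / ε)) :=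
          Real.log_mul (by norm_num) (by linarith)
        have h3 : Real.log 4 ≤ 3 := by
          nlinarith [Real.log_le_sub_one_of_pos (show (0:ℝ) < 4 by norm_num)]
        nlinarith [hLL, hC₂0]
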